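/- Let δ > 0, M₂ > 0, and set h(δ) = √(2δ/M₂). Let x ∈ ℝ and suppose f : ℝ → ℝ is twice differentiable on [x−h(δ), x+h(δ)] with |f''(t)| ≤ M₂ for all t in this interval, and suppose f_δ : ℝ → ℝ satisfies |f_δ(x+h(δ)) − f(x+h(δ))| ≤ δ and |f_δ(x−h(δ)) − f(x−h(δ))| ≤ δ. Then |(f_δ(x+h(δ)) − f_δ(x−h(δ)))/(2h(δ)) − f'(x)| ≤ √(2M₂δ). -/

import Mathlib

/-- with the optimal step `h(δ) = √(2δ/M₂)`, the symmetric
difference quotient of noisy data estimates `f'(x)` with error `≤ √(2M₂δ)`. -/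
theorem stable_diff_optimal_error
    (δ M₂ h x : ℝ) (hδ : 0 < δ) (hM₂ : 0 < M₂)
    (hh : h = Real.sqrt (2 * δ / M₂))
    (f f' f'' fδ : ℝ → ℝ)
    (hder1 : ∀ t ∈ Set.Icc (x - h) (x + h), HasDerivAt f (f' t) t)
    (hder2 : ∀ t ∈ Set.Icc (x - h) (x + h), HasDerivAt f' (f'' t) t)
    (hbound : ∀ t ∈ Set.Icc (x - h) (x + h), |f'' t| ≤ M₂)
    (hnoise1 : |fδ (x + h) - f (x + h)| ≤ δ)
    (hnoise2 : |fδ (x - h) - f (x - h)| ≤ δ) :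
    |(fδ (x + h) - fδ (x - h)) / (2 * h) - f' x| ≤ Real.sqrt (2 * M₂ * δ) := by
  have hh0 : 0 < h := by
    rw [hh]; exact Real.sqrt_pos.mpr (by positivity)
  have hhsq : h ^ 2 = 2 * δ / M₂ := by
    rw [hh]; exact Real.sq_sqrt (by positivity)
  set S := Set.Icc (x - h) (x + h) with hS
  have hconv : Convex ℝ S := convex_Icc _ _
  -- Lipschitz bound for f' on S
  have lip : ∀ a ∈ S, ∀ b ∈ S, |f' a - f' b| ≤ M₂ * |a - b| := by
    intro a ha b hb
    have := hconv.norm_image_sub_le_of_norm_hasDerivWithin_le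
      (fun t ht => (hder2 t ht).hasDerivWithinAt)
      (fun t ht => by simpa [Real.norm_eq_abs] using hbound t ht) hb ha
    simpa [Real.norm_eq_abs] using this
  have memp : ∀ t ∈ Set.Icc (0:ℝ) h, x + t ∈ S := by
    intro t ht
    obtain ⟨h1, h2⟩ := ht
    exact ⟨by linarith, by linarith⟩
  have memm : ∀ t ∈ Set.Icc (0:ℝ) h, x - t ∈ S := by
    intro t ht
    obtain ⟨h1, h2⟩ := ht
    exact ⟨by linarith, by linarith⟩
  have hx0 : x ∈ S := ⟨by linarith, by linarith⟩
  -- two auxiliary functions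
  have key : ∀ (c : ℝ), c = 1 ∨ c = -1 →
      ∀ t ∈ Set.Icc (0:ℝ) h,
      HasDerivAt (fun t => f (x + t) - f (x - t) - 2 * f' x * t + c * (M₂ * t ^ 2))
        (f' (x + t) + f' (x - t) - 2 * f' x + c * (2 * M₂ * t)) t := by
    intro c _ t ht
    have h1 : HasDerivAt (fun t : ℝ => f (x + t)) (f' (x + t)) t := by
      have := (hder1 (x + t) (memp t ht)).comp t ((hasDerivAt_id t).const_add x)
      simpa [Function.comp_def] using this
    have h2 : HasDerivAt (fun t : ℝ => f (x - t)) (-f' (x - t)) t := by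
      have := (hder1 (x - t) (memm t ht)).comp t ((hasDerivAt_id t).const_sub x)
      simpa [Function.comp_def] using this
    have h3 : HasDerivAt (fun t : ℝ => 2 * f' x * t) (2 * f' x) t := by
      simpa using (hasDerivAt_id t).const_mul (2 * f' x)
    have h4 : HasDerivAt (fun t : ℝ => c * (M₂ * t ^ 2)) (c * (2 * M₂ * t)) t := by
      have := ((hasDerivAt_pow 2 t).const_mul M₂).const_mul c
      exact this.congr_deriv (by norm_num only; ring)
    have := ((h1.sub h2).sub h3).add h4
    exact this.congr_deriv (by ring)
  -- derivative sign bounds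
  have dbound : ∀ t ∈ Set.Ioo (0:ℝ) h,
      |f' (x + t) + f' (x - t) - 2 * f' x| ≤ 2 * M₂ * t := by
    intro t ht
    have ht' : t ∈ Set.Icc (0:ℝ) h := Set.mem_Icc_of_Ioo ht
    have b1 := lip (x + t) (memp t ht') x hx0
    have b2 := lip (x - t) (memm t ht') x hx0
    have habs : |x + t - x| = t := by
      rw [show x + t - x = t by ring]; exact abs_of_nonneg ht'.1
    have habs2 : |x - t - x| = t := by
      rw [show x - t - x = -t by ring]; rw [abs_neg]; exact abs_of_nonneg ht'.1
    rw [habs] at b1; rw [habs2] at b2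
    have c1 := abs_le.mp b1
    have c2 := abs_le.mp b2
    rw [abs_le]; constructor <;> [nlinarith; nlinarith]
  -- antitone / monotone conclusions
  have taylor : |f (x + h) - f (x - h) - 2 * f' x * h| ≤ M₂ * h ^ 2 := by
    have hanti : AntitoneOn
        (fun t => f (x + t) - f (x - t) - 2 * f' x * t + (-1) * (M₂ * t ^ 2))
        (Set.Icc 0 h) := by
      apply antitoneOn_of_deriv_nonpos (convex_Icc 0 h)
      · intro t ht
        exact (key (-1) (Or.inr rfl) t ht).continuousAt.continuousWithinAt
      · intro t ht
        rw [interior_Icc] at ht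
        exact (key (-1) (Or.inr rfl) t (Set.mem_Icc_of_Ioo ht)).differentiableAt.differentiableWithinAt
      · intro t ht
        rw [interior_Icc] at ht
        rw [(key (-1) (Or.inr rfl) t (Set.mem_Icc_of_Ioo ht)).deriv]
        have := (abs_le.mp (dbound t ht)).2
        nlinarith
    have hmono : MonotoneOn
        (fun t => f (x + t) - f (x - t) - 2 * f' x * t + 1 * (M₂ * t ^ 2))
        (Set.Icc 0 h) := by
      apply monotoneOn_of_deriv_nonneg (convex_Icc 0 h)
      · intro t ht
        exact (key 1 (Or.inl rfl) t ht).continuousAt.continuousWithinAt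
      · intro t ht
        rw [interior_Icc] at ht
        exact (key 1 (Or.inl rfl) t (Set.mem_Icc_of_Ioo ht)).differentiableAt.differentiableWithinAt
      · intro t ht
        rw [interior_Icc] at ht
        rw [(key 1 (Or.inl rfl) t (Set.mem_Icc_of_Ioo ht)).deriv]
        have := (abs_le.mp (dbound t ht)).1
        nlinarith
    have e1 := hanti (Set.left_mem_Icc.mpr hh0.le) (Set.right_mem_Icc.mpr hh0.le) hh0.le
    have e2 := hmono (Set.left_mem_Icc.mpr hh0.le) (Set.right_mem_Icc.mpr hh0.le) hh0.le
    simp only [add_zero, sub_zero, mul_zero, ne_eq, OfNat.ofNat_ne_zero, not_false_eq_true, zero_pow, mul_one, neg_mul, one_mul, sub_self, zero_sub, add_neg_cancel, zero_add] at e1 e2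
    rw [abs_le]
    constructor <;> nlinarith
  -- combine with noise
  have n1 := abs_le.mp hnoise1
  have n2 := abs_le.mp hnoise2
  have t1 := abs_le.mp taylor
  have main : |fδ (x + h) - fδ (x - h) - 2 * f' x * h| ≤ 2 * δ + M₂ * h ^ 2 := by
    rw [abs_le]; constructor <;> nlinarith
  -- rewrite LHS
  have h2h : (0:ℝ) < 2 * h := by linarith
  have lhs_eq : (fδ (x + h) - fδ (x - h)) / (2 * h) - f' x
      = (fδ (x + h) - fδ (x - h) - 2 * f' x * h) / (2 * h) := by
    field_simp
  rw [lhs_eq, abs_div, abs_of_pos h2h, div_le_iff₀ h2h]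
  -- final arithmetic: √(2M₂δ) * (2h) = 4δ = 2*(2δ + M₂h²)/2 ... compute
  have hsqrt : Real.sqrt (2 * M₂ * δ) * h = 2 * δ := by
    rw [hh, ← Real.sqrt_mul (by positivity)]
    rw [show 2 * M₂ * δ * (2 * δ / M₂) = (2 * δ) ^ 2 by field_simp]
    exact Real.sqrt_sq (by positivity)
  have hM2h : M₂ * h ^ 2 = 2 * δ := by rw [hhsq]; field_simp
  calc |fδ (x + h) - fδ (x - h) - 2 * f' x * h| ≤ 2 * δ + M₂ * h ^ 2 := main
    _ = Real.sqrt (2 * M₂ * δ) * (2 * h) := by rw [hM2h]; nlinarith [hsqrt]
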